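/- Let ρ(x) = 1/(2π(1−cos x)). For every smooth 2π-periodic function f : ℝ → ℝ with f(0) = 0, the following identity holds: ∫_{−π}^{π} sin x · f'(x) · f(x) · ρ(x) dx = (1/2) ∫_{−π}^{π} f(x)² ρ(x) dx (both integrals being finite). -/

import Mathlib

open Real MeasureTheory Set

/-- The singular weight `ρ(x) = 1/(2π(1 − cos x))` on the circle. -/
noncomputable def rho (x : ℝ) : ℝ := 1 / (2 * π * (1 - Real.cos x))

/-- For every smooth `2π`-periodic `f` with `f(0) = 0`, one has
`∫ sin x · f'(x) · f(x) · ρ(x) dx = (1/2) ∫ f(x)² ρ(x) dx` on `(−π, π)`,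
both integrals being finite. -/
theorem stmt5 (f : ℝ → ℝ) (hf : ContDiff ℝ (⊤:ℕ∞) f)
    (hper : ∀ x, f (x + 2*π) = f x) (h0 : f 0 = 0) :
    IntervalIntegrable (fun x => Real.sin x * deriv f x * f x * rho x) volume (-π) π ∧
    IntervalIntegrable (fun x => (f x)^2 * rho x) volume (-π) π ∧
    (∫ x in (-π)..π, Real.sin x * deriv f x * f x * rho x)
      = (1/2) * ∫ x in (-π)..π, (f x)^2 * rho x := by

  have hπ : (0:ℝ) < π := Real.pi_pos
  have hfd : Differentiable ℝ f := hf.differentiable (by simp)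
  have hfc : Continuous f := hfd.continuous
  have hf' : Continuous (deriv f) := hf.continuous_deriv (mod_cast le_top)
  obtain ⟨L, hL⟩ := (isCompact_Icc (a := -π) (b := π)).exists_bound_of_continuousOn
    hf'.continuousOn
  have h0mem : (0:ℝ) ∈ Icc (-π) π := ⟨by linarith, by linarith⟩
  have hL0 : 0 ≤ L := le_trans (norm_nonneg _) (hL 0 h0mem)
  -- |f x| ≤ L * |x| on Icc
  have hfb : ∀ x ∈ Icc (-π) π, |f x| ≤ L * |x| := by
    intro x hx
    have := (convex_Icc (-π) π).norm_image_sub_le_of_norm_deriv_le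
      (fun y hy => hfd y) hL h0mem hx
    simpa [h0, Real.norm_eq_abs] using this
  -- key quadratic bound for cosine
  have hcos : ∀ x ∈ Icc (-π) π, 2/π^2 * x^2 ≤ 1 - Real.cos x := by
    intro x hx
    have := Real.cos_le_one_sub_mul_cos_sq (x := x) (abs_le.2 ⟨hx.1, hx.2⟩)
    linarith
  have hρpos : ∀ x ∈ Icc (-π) π, x ≠ 0 → 0 < 1 - Real.cos x := by
    intro x hx hx0
    have h1 := hcos x hx
    have : 0 < 2/π^2 * x^2 := by positivity
    linarith
  have hρb : ∀ x ∈ Icc (-π) π, x ≠ 0 → rho x ≤ π/(4*x^2) ∧ 0 ≤ rho x := by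
    intro x hx hx0
    have h1 := hρpos x hx hx0
    have h2 := hcos x hx
    have hx2 : (0:ℝ) < x^2 := by positivity
    have key : π^2 * (2/π^2 * x^2) ≤ π^2 * (1 - Real.cos x) :=
      mul_le_mul_of_nonneg_left h2 (by positivity)
    have key2 : 2*x^2 ≤ π^2 * (1 - Real.cos x) := by
      have : π^2 * (2/π^2 * x^2) = 2*x^2 := by field_simp
      linarith
    constructor
    · show 1 / (2 * π * (1 - Real.cos x)) ≤ π/(4*x^2)
      rw [div_le_div_iff₀ (by positivity) (by positivity)]
      nlinarith
    · have : (0:ℝ) < 1 / (2 * π * (1 - Real.cos x)) := by positivity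
      exact le_of_lt this
  -- bounds on the two integrands
  have hsq : ∀ x ∈ Icc (-π) π, (f x)^2 ≤ L^2 * x^2 := by
    intro x hx
    have hfx := hfb x hx
    nlinarith [abs_nonneg (f x), sq_abs (f x), sq_abs x, abs_nonneg x]
  have hb2 : ∀ x ∈ Icc (-π) π, |(f x)^2 * rho x| ≤ L^2*π/4 := by
    intro x hx
    rcases eq_or_ne x 0 with rfl | hx0
    · simp [rho, h0]; positivity
    · obtain ⟨hr1, hr2⟩ := hρb x hx hx0
      have hx2 : (0:ℝ) < x^2 := by positivity
      rw [abs_of_nonneg (by positivity : (0:ℝ) ≤ (f x)^2 * rho x)]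
      calc (f x)^2 * rho x ≤ (L^2 * x^2) * (π/(4*x^2)) :=
            mul_le_mul (hsq x hx) hr1 hr2 (by positivity)
        _ = L^2*π/4 := by field_simp
  have hb1 : ∀ x ∈ Icc (-π) π, |Real.sin x * deriv f x * f x * rho x| ≤ L^2*π/4 := by
    intro x hx
    rcases eq_or_ne x 0 with rfl | hx0
    · simp [rho]; positivity
    · obtain ⟨hr1, hr2⟩ := hρb x hx hx0
      have hfx := hfb x hx
      have hdx : |deriv f x| ≤ L := hL x hx
      have hsx : |Real.sin x| ≤ |x| := Real.abs_sin_le_abs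
      have hx2 : (0:ℝ) < x^2 := by positivity
      have h1 : |Real.sin x * deriv f x * f x| ≤ L^2 * x^2 := by
        rw [abs_mul, abs_mul]
        calc |Real.sin x| * |deriv f x| * |f x| ≤ |x| * L * (L * |x|) := by
              apply mul_le_mul (mul_le_mul hsx hdx (abs_nonneg _) (abs_nonneg _)) hfx
                (abs_nonneg _) (by positivity)
          _ = L^2 * x^2 := by rw [← sq_abs x]; ring
      rw [abs_mul, abs_of_nonneg hr2]
      calc |Real.sin x * deriv f x * f x| * rho x ≤ (L^2 * x^2) * (π/(4*x^2)) :=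
            mul_le_mul h1 hr1 hr2 (by positivity)
        _ = L^2*π/4 := by field_simp
  -- measurability
  have hmρ : Measurable rho :=
    Measurable.div measurable_const
      ((measurable_const.sub Real.continuous_cos.measurable).const_mul (2*π))
  have hm1 : AEStronglyMeasurable (fun x => Real.sin x * deriv f x * f x * rho x)
      (volume.restrict (Ioc (-π) π)) :=
    ((((Real.continuous_sin.measurable.mul hf'.measurable).mul hfc.measurable).mul
      hmρ)).aestronglyMeasurable
  have hm2 : AEStronglyMeasurable (fun x => (f x)^2 * rho x)
      (volume.restrict (Ioc (-π) π)) :=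
    (((hfc.pow 2).measurable.mul hmρ)).aestronglyMeasurable
  have hsub : Ioc (-π) π ⊆ Icc (-π) π := Ioc_subset_Icc_self
  have hab : (-π:ℝ) ≤ π := by linarith
  -- integrability
  have hint1 : IntervalIntegrable (fun x => Real.sin x * deriv f x * f x * rho x)
      volume (-π) π := by
    rw [intervalIntegrable_iff, uIoc_of_le hab]
    refine Integrable.mono' (g := fun _ => L^2*π/4)
      (integrableOn_const measure_Ioc_lt_top.ne) hm1 ?_
    filter_upwards [ae_restrict_mem measurableSet_Ioc] with x hx
    exact hb1 x (hsub hx)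
  have hint2 : IntervalIntegrable (fun x => (f x)^2 * rho x) volume (-π) π := by
    rw [intervalIntegrable_iff, uIoc_of_le hab]
    refine Integrable.mono' (g := fun _ => L^2*π/4)
      (integrableOn_const measure_Ioc_lt_top.ne) hm2 ?_
    filter_upwards [ae_restrict_mem measurableSet_Ioc] with x hx
    exact hb2 x (hsub hx)
  -- the primitive
  set F : ℝ → ℝ := fun x => (f x)^2 * (Real.sin x * rho x) with hFdef
  set G : ℝ → ℝ := fun x => 2*(Real.sin x * deriv f x * f x * rho x) - (f x)^2 * rho x
    with hGdef
  have hGint : IntervalIntegrable G volume (-π) π := (hint1.const_mul 2).sub hint2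
  -- continuity of F on Icc
  have hFcont : ContinuousOn F (Icc (-π) π) := by
    intro x hx
    rcases eq_or_ne x 0 with rfl | hx0
    · have hFb : ∀ y ∈ Icc (-π) π, ‖F y‖ ≤ L^2*π/4 * |Real.sin y| := by
        intro y hy
        rcases eq_or_ne y 0 with rfl | hy0
        · simp [hFdef, rho]
        · obtain ⟨hr1, hr2⟩ := hρb y hy hy0
          have hy2 : (0:ℝ) < y^2 := by positivity
          have heq : ‖F y‖ = (f y)^2 * rho y * |Real.sin y| := by
            rw [hFdef]; rw [Real.norm_eq_abs, abs_mul, abs_mul,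
              abs_of_nonneg (by positivity : (0:ℝ) ≤ (f y)^2), abs_of_nonneg hr2]; ring
          rw [heq]
          have h2 : (f y)^2 * rho y ≤ L^2*π/4 :=
            calc (f y)^2 * rho y ≤ (L^2 * y^2) * (π/(4*y^2)) :=
                  mul_le_mul (hsq y hy) hr1 hr2 (by positivity)
              _ = L^2*π/4 := by field_simp
          exact mul_le_mul_of_nonneg_right h2 (abs_nonneg _)
      have hF0 : F 0 = 0 := by simp [hFdef, rho]
      have htend : Filter.Tendsto (fun y => L^2*π/4 * |Real.sin y|)
          (nhdsWithin 0 (Icc (-π) π)) (nhds 0) := by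
        have h : Continuous (fun y : ℝ => L^2*π/4 * |Real.sin y|) :=
          continuous_const.mul Real.continuous_sin.abs
        have := (h.tendsto 0).mono_left (nhdsWithin_le_nhds (s := Icc (-π) π))
        simpa using this
      rw [ContinuousWithinAt, hF0]
      exact squeeze_zero_norm'
        (Filter.eventually_of_mem self_mem_nhdsWithin (fun y hy => hFb y hy)) htend
    · have hd : (2 * π * (1 - Real.cos x)) ≠ 0 := by
        have := hρpos x hx hx0; positivity
      have hρc : ContinuousAt rho x :=
        ContinuousAt.div continuousAt_const
          ((continuous_const.mul (continuous_const.sub Real.continuous_cos)).continuousAt) hd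
      exact (((hfc.pow 2).continuousAt.mul
        (Real.continuous_sin.continuousAt.mul hρc)).continuousWithinAt)
  -- derivative of F off 0
  have hFder : ∀ x ∈ Icc (-π) π, x ≠ 0 → HasDerivAt F (G x) x := by
    intro x hx hx0
    have hdpos := hρpos x hx hx0
    have hd : (2 * π * (1 - Real.cos x)) ≠ 0 := by positivity
    have h1 : HasDerivAt (fun y => 2*π*(1 - Real.cos y)) (2*π*Real.sin x) x := by
      have := ((Real.hasDerivAt_cos x).const_sub 1).const_mul (2*π)
      simpa using this
    have hρd : HasDerivAt rho ((0 * (2*π*(1 - Real.cos x)) - 1 * (2*π*Real.sin x))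
        / (2*π*(1 - Real.cos x))^2) x :=
      (hasDerivAt_const x (1:ℝ)).div h1 hd
    have hsr : HasDerivAt (fun y => Real.sin y * rho y)
        (Real.cos x * rho x + Real.sin x * ((0 * (2*π*(1 - Real.cos x))
          - 1 * (2*π*Real.sin x)) / (2*π*(1 - Real.cos x))^2)) x :=
      (Real.hasDerivAt_sin x).mul hρd
    have hf2 : HasDerivAt (fun y => (f y)^2) (2 * f x * deriv f x) x := by
      have := ((hfd x).hasDerivAt).fun_pow 2
      simpa [mul_comm] using this
    have hkey : Real.cos x * rho x + Real.sin x * ((0 * (2*π*(1 - Real.cos x))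
        - 1 * (2*π*Real.sin x)) / (2*π*(1 - Real.cos x))^2) = - rho x := by
      have hs2 : Real.sin x ^ 2 = 1 - Real.cos x ^ 2 := Real.sin_sq x
      show Real.cos x * (1 / (2 * π * (1 - Real.cos x)))
          + Real.sin x * ((0 * (2*π*(1 - Real.cos x)) - 1 * (2*π*Real.sin x))
            / (2*π*(1 - Real.cos x))^2) = -(1 / (2 * π * (1 - Real.cos x)))
      field_simp
      ring_nf
      linear_combination (-1 : ℝ) * hs2
    have hFd : HasDerivAt F _ x := hf2.mul hsr
    convert hFd using 1
    rw [hkey]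
    show 2*(Real.sin x * deriv f x * f x * rho x) - (f x)^2 * rho x
      = 2 * f x * deriv f x * (Real.sin x * rho x) + (f x)^2 * (- rho x)
    ring
  -- FTC on the two halves
  have hF0 : F 0 = 0 := by simp [hFdef, rho]
  have hFpi : F π = 0 := by simp [hFdef]
  have hFnpi : F (-π) = 0 := by simp [hFdef]
  have hsub1 : uIcc (0:ℝ) π ⊆ uIcc (-π) π := by
    apply uIcc_subset_uIcc <;> rw [uIcc_of_le hab]
    · exact h0mem
    · exact ⟨hab, le_refl _⟩
  have hsub2 : uIcc (-π) (0:ℝ) ⊆ uIcc (-π) π := by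
    apply uIcc_subset_uIcc <;> rw [uIcc_of_le hab]
    · exact ⟨le_refl _, hab⟩
    · exact h0mem
  have hFTC1 : ∫ x in (0:ℝ)..π, G x = F π - F 0 := by
    apply intervalIntegral.integral_eq_sub_of_hasDerivAt_of_le hπ.le
      (hFcont.mono (Icc_subset_Icc (by linarith) (le_refl _)))
      (fun x hx => hFder x ⟨by linarith [hx.1], hx.2.le⟩ (ne_of_gt hx.1))
      (hGint.mono_set hsub1)
  have hFTC2 : ∫ x in (-π)..(0:ℝ), G x = F 0 - F (-π) := by
    apply intervalIntegral.integral_eq_sub_of_hasDerivAt_of_le (by linarith)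
      (hFcont.mono (Icc_subset_Icc (le_refl _) (by linarith)))
      (fun x hx => hFder x ⟨hx.1.le, by linarith [hx.2]⟩ (ne_of_lt hx.2))
      (hGint.mono_set hsub2)
  have hGzero : ∫ x in (-π)..π, G x = 0 := by
    rw [← intervalIntegral.integral_add_adjacent_intervals
      (hGint.mono_set hsub2) (hGint.mono_set hsub1)]
    rw [hFTC1, hFTC2, hF0, hFpi, hFnpi]; ring
  have hsplit : ∫ x in (-π)..π, G x
      = 2 * (∫ x in (-π)..π, Real.sin x * deriv f x * f x * rho x)
        - ∫ x in (-π)..π, (f x)^2 * rho x := by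
    rw [hGdef]
    rw [intervalIntegral.integral_sub (hint1.const_mul 2) hint2,
      intervalIntegral.integral_const_mul]
  refine ⟨hint1, hint2, ?_⟩
  rw [hsplit] at hGzero
  linarith
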